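/- Let (Y, d) be a metric space equipped with a σ-finite measure ν_Y, Θ a measurable space with a σ-finite measure ν_Θ, y ∈ Y, and 0 < ε ≤ ε'. Let p : Θ → (0, ∞) and f : Y × Θ → (0, ∞) be measurable, and suppose Z_ε = ∫∫ p(θ) f(x|θ) 𝟙_{B_ε(y)}(x) ν_Θ(dθ) ν_Y(dx) and Z_{ε'} (defined analogously) are finite and strictly positive, where B_r(y) = {x : d(x, y) ≤ r}. Define the ABC posterior densities π^ε(θ, x) = p(θ) f(x|θ) 𝟙_{B_ε(y)}(x) / Z_ε and π^{ε'}(θ', x') = p(θ') f(x'|θ') 𝟙_{B_{ε'}(y)}(x') / Z_{ε'}. Then the ABC exchange kernel, which from state ((θ, x), (θ', x')) moves to ((θ', x'), (θ, x)) if x' ∈ B_ε(y) and otherwise stays, preserves the product π^ε ⊗ π^{ε'}: for every bounded measurable F, ∫ [𝟙_{B_ε(y)}(x') F((θ', x'), (θ, x)) + (1 − 𝟙_{B_ε(y)}(x')) F((θ, x), (θ', x'))] π^ε(θ, x) π^{ε'}(θ', x') ν_Θ(dθ) ν_Y(dx) ν_Θ(dθ') ν_Y(dx') = ∫ F((θ,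 x), (θ', x')) π^ε(θ, x) π^{ε'}(θ', x') ν_Θ(dθ) ν_Y(dx) ν_Θ(dθ') ν_Y(dx'). -/

import Mathlib

open MeasureTheory Set

/-- The ABC exchange kernel — which from state `((θ,x),(θ',x'))` swaps to
`((θ',x'),(θ,x))` iff `x' ∈ B_ε(y)` and otherwise stays — preserves the product
`π^ε ⊗ π^{ε'}` of the two normalized ABC posteriors
`π^ε(θ,x) = p(θ) f(x|θ) 𝟙_{B_ε(y)}(x)/Z_ε` (tolerances `0 < ε ≤ ε'`):
for every bounded measurable `F`, the integral of the moved state equals the integral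
of the current state. -/
theorem abc_exchange_kernel_invariance
    {Y : Type*} [MetricSpace Y] [MeasurableSpace Y] [OpensMeasurableSpace Y]
    {Θ : Type*} [MeasurableSpace Θ]
    (νY : Measure Y) [SigmaFinite νY] (νΘ : Measure Θ) [SigmaFinite νΘ]
    (y : Y) (ε ε' : ℝ) (hε : 0 < ε) (hεε' : ε ≤ ε')
    (p : Θ → ℝ) (hpm : Measurable p) (hp : ∀ θ, 0 < p θ)
    (f : Y × Θ → ℝ) (hfm : Measurable f) (hf : ∀ q, 0 < f q)
    (Zε Zε' : ℝ) (hZε : 0 < Zε) (hZε' : 0 < Zε')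
    (hZεdef : Zε = ∫ q : Θ × Y,
      p q.1 * f (q.2, q.1) * (Metric.closedBall y ε).indicator (fun _ => (1 : ℝ)) q.2
        ∂(νΘ.prod νY))
    (hZε'def : Zε' = ∫ q : Θ × Y,
      p q.1 * f (q.2, q.1) * (Metric.closedBall y ε').indicator (fun _ => (1 : ℝ)) q.2
        ∂(νΘ.prod νY))
    (hZεint : Integrable (fun q : Θ × Y =>
      p q.1 * f (q.2, q.1) * (Metric.closedBall y ε).indicator (fun _ => (1 : ℝ)) q.2)
      (νΘ.prod νY))
    (hZε'int : Integrable (fun q : Θ × Y =>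
      p q.1 * f (q.2, q.1) * (Metric.closedBall y ε').indicator (fun _ => (1 : ℝ)) q.2)
      (νΘ.prod νY))
    (πε πε' : Θ × Y → ℝ)
    (hπε : ∀ q, πε q
      = p q.1 * f (q.2, q.1) * (Metric.closedBall y ε).indicator (fun _ => (1 : ℝ)) q.2 / Zε)
    (hπε' : ∀ q, πε' q
      = p q.1 * f (q.2, q.1) * (Metric.closedBall y ε').indicator (fun _ => (1 : ℝ)) q.2 / Zε')
    (F : (Θ × Y) × (Θ × Y) → ℝ) (hFm : Measurable F) (hFb : ∃ C, ∀ z, |F z| ≤ C) :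
    ∫ z : (Θ × Y) × (Θ × Y),
        ((Metric.closedBall y ε).indicator (fun _ => (1 : ℝ)) z.2.2 * F (z.2, z.1)
          + (1 - (Metric.closedBall y ε).indicator (fun _ => (1 : ℝ)) z.2.2) * F (z.1, z.2))
          * (πε z.1 * πε' z.2) ∂((νΘ.prod νY).prod (νΘ.prod νY))
      = ∫ z : (Θ × Y) × (Θ × Y), F (z.1, z.2) * (πε z.1 * πε' z.2)
          ∂((νΘ.prod νY).prod (νΘ.prod νY)) := by

  classical
  obtain ⟨C, hC⟩ := hFb
  set m : Measure (Θ × Y) := νΘ.prod νY with hm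
  set ind : Y → ℝ := (Metric.closedBall y ε).indicator (fun _ => (1 : ℝ)) with hind
  have hball : MeasurableSet (Metric.closedBall y ε) := measurableSet_closedBall
  have hball' : MeasurableSet (Metric.closedBall y ε') := measurableSet_closedBall
  have hsub : Metric.closedBall y ε ⊆ Metric.closedBall y ε' :=
    Metric.closedBall_subset_closedBall hεε'
  -- measurability of the densities
  have hπεm : Measurable πε := by
    have h : πε = fun q : Θ × Y =>
        p q.1 * f (q.2, q.1) * (Metric.closedBall y ε).indicator (fun _ => (1 : ℝ)) q.2 / Zε :=
      funext hπε
    rw [h]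
    exact (((hpm.comp measurable_fst).mul
      (hfm.comp (measurable_snd.prodMk measurable_fst))).mul
      ((measurable_const.indicator hball).comp measurable_snd)).div_const _
  have hπε'm : Measurable πε' := by
    have h : πε' = fun q : Θ × Y =>
        p q.1 * f (q.2, q.1) * (Metric.closedBall y ε').indicator (fun _ => (1 : ℝ)) q.2 / Zε' :=
      funext hπε'
    rw [h]
    exact (((hpm.comp measurable_fst).mul
      (hfm.comp (measurable_snd.prodMk measurable_fst))).mul
      ((measurable_const.indicator hball').comp measurable_snd)).div_const _
  -- integrability of the densities
  have hπεint : Integrable πε m := by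
    have h : πε = fun q : Θ × Y =>
        p q.1 * f (q.2, q.1) * (Metric.closedBall y ε).indicator (fun _ => (1 : ℝ)) q.2 / Zε :=
      funext hπε
    rw [h]
    exact hZεint.div_const _
  have hπε'int : Integrable πε' m := by
    have h : πε' = fun q : Θ × Y =>
        p q.1 * f (q.2, q.1) * (Metric.closedBall y ε').indicator (fun _ => (1 : ℝ)) q.2 / Zε' :=
      funext hπε'
    rw [h]
    exact hZε'int.div_const _
  have hwint : Integrable (fun z : (Θ × Y) × (Θ × Y) => πε z.1 * πε' z.2) (m.prod m) :=
    hπεint.mul_prod hπε'int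
  have hwm : Measurable (fun z : (Θ × Y) × (Θ × Y) => πε z.1 * πε' z.2) :=
    (hπεm.comp measurable_fst).mul (hπε'm.comp measurable_snd)
  have hindm : Measurable ind := measurable_const.indicator hball
  -- the key symmetry identity
  have key : ∀ z : (Θ × Y) × (Θ × Y),
      ind z.2.2 * (πε z.1 * πε' z.2) = ind z.1.2 * (πε z.2 * πε' z.1) := by
    rintro ⟨⟨θ, x⟩, θ', x'⟩
    simp only [hπε, hπε', hind]
    by_cases hx : x ∈ Metric.closedBall y ε <;>
      by_cases hx' : x' ∈ Metric.closedBall y ε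
    · have hx1 : x ∈ Metric.closedBall y ε' := hsub hx
      have hx'1 : x' ∈ Metric.closedBall y ε' := hsub hx'
      simp only [Set.indicator_of_mem, hx, hx', hx1, hx'1]
      ring
    · have hx'0 : (Metric.closedBall y ε).indicator (fun _ => (1 : ℝ)) x' = 0 :=
        Set.indicator_of_notMem hx' _
      simp only [hx'0, Set.indicator_of_mem hx]
      ring
    · have hx0 : (Metric.closedBall y ε).indicator (fun _ => (1 : ℝ)) x = 0 :=
        Set.indicator_of_notMem hx _
      simp only [hx0, Set.indicator_of_mem hx']
      ring
    · have hx0 : (Metric.closedBall y ε).indicator (fun _ => (1 : ℝ)) x = 0 :=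
        Set.indicator_of_notMem hx _
      have hx'0 : (Metric.closedBall y ε).indicator (fun _ => (1 : ℝ)) x' = 0 :=
        Set.indicator_of_notMem hx' _
      simp only [hx0, hx'0]
      ring
  -- bounded multipliers
  have hindb : ∀ x : Y, |ind x| ≤ 1 := by
    intro x
    simp only [hind]
    by_cases hx : x ∈ Metric.closedBall y ε
    · rw [Set.indicator_of_mem hx]; norm_num
    · rw [Set.indicator_of_notMem hx]; norm_num
  -- integrable pieces
  have hH : Integrable (fun z : (Θ × Y) × (Θ × Y) =>
      (F z * ind z.2.2) * (πε z.1 * πε' z.2)) (m.prod m) := by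
    refine hwint.bdd_mul ((hFm.mul (hindm.comp (measurable_snd.comp measurable_snd))).aestronglyMeasurable) (c := max C 0) (Filter.Eventually.of_forall fun z => ?_)
    have h1 : |F z| ≤ C := hC z
    have h0 : (0 : ℝ) ≤ C := le_trans (abs_nonneg _) h1
    calc ‖F z * ind z.2.2‖ = |F z| * |ind z.2.2| := abs_mul _ _
      _ ≤ C * 1 := mul_le_mul h1 (hindb _) (abs_nonneg _) h0
      _ = C := mul_one C
      _ ≤ max C 0 := le_max_left _ _
  have hG : Integrable (fun z : (Θ × Y) × (Θ × Y) =>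
      ((1 - ind z.2.2) * F z) * (πε z.1 * πε' z.2)) (m.prod m) := by
    refine hwint.bdd_mul (((measurable_const.sub (hindm.comp (measurable_snd.comp measurable_snd))).mul hFm).aestronglyMeasurable) (c := 2 * max C 0) (Filter.Eventually.of_forall fun z => ?_)
    have h1 : |F z| ≤ C := hC z
    have h0 : (0 : ℝ) ≤ C := le_trans (abs_nonneg _) h1
    have h2 : |1 - ind z.2.2| ≤ 2 := by
      have := hindb z.2.2
      have h3 := abs_sub_abs_le_abs_sub (1 : ℝ) (ind z.2.2)
      have h4 := abs_sub (1 : ℝ) (ind z.2.2)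
      calc |1 - ind z.2.2| ≤ |(1 : ℝ)| + |ind z.2.2| := abs_sub _ _
        _ ≤ 1 + 1 := by simp only [abs_one]; linarith
        _ = 2 := by norm_num
    calc ‖(1 - ind z.2.2) * F z‖ = |1 - ind z.2.2| * |F z| := abs_mul _ _
      _ ≤ 2 * C := mul_le_mul h2 h1 (abs_nonneg _) (by norm_num)
      _ ≤ 2 * max C 0 := by have := le_max_left C 0; linarith
  have hHswap : Integrable (fun z : (Θ × Y) × (Θ × Y) =>
      (F z.swap * ind z.swap.2.2) * (πε z.swap.1 * πε' z.swap.2)) (m.prod m) := hH.swap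
  -- main computation
  have step1 : ∀ z : (Θ × Y) × (Θ × Y),
      ((Metric.closedBall y ε).indicator (fun _ => (1 : ℝ)) z.2.2 * F (z.2, z.1)
        + (1 - (Metric.closedBall y ε).indicator (fun _ => (1 : ℝ)) z.2.2) * F (z.1, z.2))
        * (πε z.1 * πε' z.2)
      = (F z.swap * ind z.swap.2.2) * (πε z.swap.1 * πε' z.swap.2)
        + ((1 - ind z.2.2) * F z) * (πε z.1 * πε' z.2) := by
    rintro ⟨⟨θ, x⟩, θ', x'⟩
    have hkey := key ((θ, x), (θ', x'))
    simp only [Prod.swap, hind] at hkey ⊢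
    linear_combination F ((θ', x'), (θ, x)) * hkey
  calc ∫ z : (Θ × Y) × (Θ × Y),
        ((Metric.closedBall y ε).indicator (fun _ => (1 : ℝ)) z.2.2 * F (z.2, z.1)
          + (1 - (Metric.closedBall y ε).indicator (fun _ => (1 : ℝ)) z.2.2) * F (z.1, z.2))
          * (πε z.1 * πε' z.2) ∂(m.prod m)
      = ∫ z : (Θ × Y) × (Θ × Y),
          ((F z.swap * ind z.swap.2.2) * (πε z.swap.1 * πε' z.swap.2)
            + ((1 - ind z.2.2) * F z) * (πε z.1 * πε' z.2)) ∂(m.prod m) :=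
        integral_congr_ae (Filter.Eventually.of_forall step1)
    _ = (∫ z : (Θ × Y) × (Θ × Y),
          (F z.swap * ind z.swap.2.2) * (πε z.swap.1 * πε' z.swap.2) ∂(m.prod m))
        + ∫ z : (Θ × Y) × (Θ × Y),
          ((1 - ind z.2.2) * F z) * (πε z.1 * πε' z.2) ∂(m.prod m) :=
        integral_add hHswap hG
    _ = (∫ z : (Θ × Y) × (Θ × Y),
          (F z * ind z.2.2) * (πε z.1 * πε' z.2) ∂(m.prod m))
        + ∫ z : (Θ × Y) × (Θ × Y),
          ((1 - ind z.2.2) * F z) * (πε z.1 * πε' z.2) ∂(m.prod m) := by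
        rw [integral_prod_swap (fun z : (Θ × Y) × (Θ × Y) =>
          (F z * ind z.2.2) * (πε z.1 * πε' z.2))]
    _ = ∫ z : (Θ × Y) × (Θ × Y),
          ((F z * ind z.2.2) * (πε z.1 * πε' z.2)
            + ((1 - ind z.2.2) * F z) * (πε z.1 * πε' z.2)) ∂(m.prod m) :=
        (integral_add hH hG).symm
    _ = ∫ z : (Θ × Y) × (Θ × Y), F (z.1, z.2) * (πε z.1 * πε' z.2) ∂(m.prod m) := by
        refine integral_congr_ae (Filter.Eventually.of_forall fun z => ?_)
        simp only [Prod.mk.eta]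
        ring
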